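/- arXiv:1705.08527 — 5 statements merged into one kernel-verified Lean document; each statement's English description precedes it below -/
import Mathlib

section
/- Let U_1,…,U_n be real random variables on a common probability space with E[U_i] = 0 and |U_i| ≤ M almost surely for every i, and let D_1,…,D_n ⊆ {1,…,n} be sets satisfying i ∈ D_i and the symmetry condition j ∈ D_i if and only if i ∈ D_j. Assume that for all indices i, j, k, l with j ∈ D_i and l ∈ D_k, if (D_i ∪ D_j) ∩ {k, l} = ∅ then Cov(U_i U_j, U_k U_l) = 0. Then Var( Σ_{i=1}^n Σ_{j∈D_i} U_i U_j ) ≤ 4 M⁴ Σ_{i=1}^n Σ_{j∈D_i} Σ_{k∈D_i∪D_j} |D_k|. -/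
open MeasureTheory ProbabilityTheory Filter

/-- The covariance of two real random variables. -/
noncomputable def covar {Ω : Type*} [MeasurableSpace Ω] (μ : Measure Ω)
    (f g : Ω → ℝ) : ℝ :=
  ∫ ω, (f ω - ∫ ω', f ω' ∂μ) * (g ω - ∫ ω', g ω' ∂μ) ∂μ

section Aux

variable {Ω : Type} [MeasurableSpace Ω] (μ : Measure Ω) [IsProbabilityMeasure μ]

lemma aux_integrable {f : Ω → ℝ} {C : ℝ} (hm : Measurable f)
    (hb : ∀ᵐ ω ∂μ, |f ω| ≤ C) : Integrable f μ :=
  (integrable_const C).mono' hm.aestronglyMeasurable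
    (hb.mono fun ω h => by simpa [Real.norm_eq_abs] using h)

lemma aux_abs_integral_le {f : Ω → ℝ} {C : ℝ}
    (hb : ∀ᵐ ω ∂μ, |f ω| ≤ C) : |∫ ω, f ω ∂μ| ≤ C := by
  have := norm_integral_le_of_norm_le_const (μ := μ) (f := f) (C := C)
    (hb.mono fun ω h => by simpa [Real.norm_eq_abs] using h)
  simpa [Real.norm_eq_abs, measure_univ] using this

lemma aux_int_prod_sub {f g : Ω → ℝ} (hf : Integrable f μ) (hg : Integrable g μ)
    (hfg : Integrable (fun ω => f ω * g ω) μ) (a b : ℝ) :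
    ∫ ω, (f ω - a) * (g ω - b) ∂μ
      = (∫ ω, f ω * g ω ∂μ) - a * (∫ ω, g ω ∂μ) - b * (∫ ω, f ω ∂μ) + a * b := by
  have key : ∀ ω, (f ω - a) * (g ω - b)
      = f ω * g ω - (a * g ω + b * f ω - a * b) := fun ω => by ring
  have I2 : Integrable (fun ω => a * g ω + b * f ω) μ :=
    (hg.const_mul a).add (hf.const_mul b)
  have I1 : Integrable (fun ω => a * g ω + b * f ω - a * b) μ :=
    I2.sub (integrable_const _)
  simp_rw [key]
  rw [integral_sub hfg I1, integral_sub I2 (integrable_const _),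
    integral_add (hg.const_mul a) (hf.const_mul b),
    integral_const_mul, integral_const_mul, integral_const]
  simp only [measure_univ, probReal_univ, ENNReal.toReal_one, smul_eq_mul, one_mul, mul_one]
  ring

lemma aux_covar_eq {f g : Ω → ℝ} (hfm : Measurable f) (hgm : Measurable g)
    {C : ℝ} (hf : ∀ᵐ ω ∂μ, |f ω| ≤ C) (hg : ∀ᵐ ω ∂μ, |g ω| ≤ C) :
    covar μ f g = (∫ ω, f ω * g ω ∂μ) - (∫ ω, f ω ∂μ) * (∫ ω, g ω ∂μ) := by
  have hC : 0 ≤ C := by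
    obtain ⟨ω, hω⟩ := hf.exists
    exact (abs_nonneg _).trans hω
  have hfint : Integrable f μ := aux_integrable μ hfm hf
  have hgint : Integrable g μ := aux_integrable μ hgm hg
  have hfg : Integrable (fun ω => f ω * g ω) μ := by
    refine aux_integrable (C := C * C) μ (hfm.mul hgm) ?_
    filter_upwards [hf, hg] with ω h1 h2
    calc |f ω * g ω| = |f ω| * |g ω| := abs_mul _ _
      _ ≤ C * C := mul_le_mul h1 h2 (abs_nonneg _) hC
  unfold covar
  rw [aux_int_prod_sub μ hfint hgint hfg]
  ring

lemma aux_abs_covar_le {f g : Ω → ℝ} (hfm : Measurable f) (hgm : Measurable g)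
    {C : ℝ} (hf : ∀ᵐ ω ∂μ, |f ω| ≤ C) (hg : ∀ᵐ ω ∂μ, |g ω| ≤ C) :
    |covar μ f g| ≤ 2 * C ^ 2 := by
  have hC : 0 ≤ C := by
    obtain ⟨ω, hω⟩ := hf.exists
    exact (abs_nonneg _).trans hω
  rw [aux_covar_eq μ hfm hgm hf hg]
  have h1 : |∫ ω, f ω * g ω ∂μ| ≤ C ^ 2 := by
    refine (aux_abs_integral_le μ ?_).trans_eq (sq C).symm
    filter_upwards [hf, hg] with ω h1 h2
    calc |f ω * g ω| = |f ω| * |g ω| := abs_mul _ _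
      _ ≤ C * C := mul_le_mul h1 h2 (abs_nonneg _) hC
  have h2 : |(∫ ω, f ω ∂μ) * (∫ ω, g ω ∂μ)| ≤ C ^ 2 := by
    rw [abs_mul, sq]
    exact mul_le_mul (aux_abs_integral_le μ hf) (aux_abs_integral_le μ hg)
      (abs_nonneg _) hC
  calc |∫ ω, f ω * g ω ∂μ - (∫ ω, f ω ∂μ) * (∫ ω, g ω ∂μ)|
      ≤ |∫ ω, f ω * g ω ∂μ| + |(∫ ω, f ω ∂μ) * (∫ ω, g ω ∂μ)| := abs_sub _ _
    _ ≤ C ^ 2 + C ^ 2 := add_le_add h1 h2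
    _ = 2 * C ^ 2 := by ring

lemma aux_sum_pairs {n : ℕ} (D : Fin n → Finset (Fin n)) (f : Fin n × Fin n → ℝ) :
    ∑ p ∈ Finset.univ.filter (fun p : Fin n × Fin n => p.2 ∈ D p.1), f p
      = ∑ i, ∑ j ∈ D i, f (i, j) := by
  rw [Finset.sum_filter, Fintype.sum_prod_type]
  refine Finset.sum_congr rfl fun i _ => ?_
  simp [Finset.sum_ite_mem]

end Aux

theorem stmt_4 {Ω : Type} [MeasurableSpace Ω] (μ : Measure Ω) [IsProbabilityMeasure μ]
    {n : ℕ} (U : Fin n → Ω → ℝ) (D : Fin n → Finset (Fin n))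
    (M : ℝ)
    (hmeas : ∀ i, Measurable (U i))
    (hmean : ∀ i, ∫ ω, U i ω ∂μ = 0)
    (hbdd : ∀ i, ∀ᵐ ω ∂μ, |U i ω| ≤ M)
    (hmem : ∀ i, i ∈ D i)
    (hsym : ∀ i j, j ∈ D i ↔ i ∈ D j)
    (hcov : ∀ i j k l : Fin n, j ∈ D i → l ∈ D k →
      Disjoint (D i ∪ D j) ({k, l} : Finset (Fin n)) →
      covar μ (fun ω => U i ω * U j ω) (fun ω => U k ω * U l ω) = 0) :
    variance (fun ω => ∑ i, ∑ j ∈ D i, U i ω * U j ω) μ ≤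
      4 * M ^ 4 * ∑ i, ∑ j ∈ D i, ∑ k ∈ D i ∪ D j, ((D k).card : ℝ) := by
  classical
  set P : Finset (Fin n × Fin n) := Finset.univ.filter (fun p => p.2 ∈ D p.1) with hP
  set X : Fin n × Fin n → Ω → ℝ := fun p ω => U p.1 ω * U p.2 ω with hXdef
  have hbdd' : ∀ᵐ ω ∂μ, ∀ i, |U i ω| ≤ M := ae_all_iff.2 hbdd
  have hXbdd : ∀ p : Fin n × Fin n, ∀ᵐ ω ∂μ, |X p ω| ≤ M ^ 2 := by
    intro p
    filter_upwards [hbdd'] with ω hω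
    have h1 := hω p.1
    have h2 := hω p.2
    calc |X p ω| = |U p.1 ω| * |U p.2 ω| := abs_mul _ _
      _ ≤ M * M := mul_le_mul h1 h2 (abs_nonneg _) ((abs_nonneg _).trans h1)
      _ = M ^ 2 := (sq M).symm
  have hXmeas : ∀ p : Fin n × Fin n, Measurable (X p) :=
    fun p => (hmeas p.1).mul (hmeas p.2)
  have hXint : ∀ p, Integrable (X p) μ := fun p =>
    aux_integrable μ (hXmeas p) (hXbdd p)
  have hEXbdd : ∀ p, |∫ ω, X p ω ∂μ| ≤ M ^ 2 := fun p =>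
    aux_abs_integral_le μ (hXbdd p)
  -- Y p = centered version
  set Y : Fin n × Fin n → Ω → ℝ := fun p ω => X p ω - ∫ ω', X p ω' ∂μ with hYdef
  have hYmeas : ∀ p, Measurable (Y p) := fun p => (hXmeas p).sub measurable_const
  have hYbdd : ∀ p, ∀ᵐ ω ∂μ, |Y p ω| ≤ 2 * M ^ 2 := by
    intro p
    filter_upwards [hXbdd p] with ω hω
    calc |Y p ω| ≤ |X p ω| + |∫ ω', X p ω' ∂μ| := abs_sub _ _
      _ ≤ M ^ 2 + M ^ 2 := add_le_add hω (hEXbdd p)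
      _ = 2 * M ^ 2 := by ring
  have hYYint : ∀ p q, Integrable (fun ω => Y p ω * Y q ω) μ := by
    intro p q
    refine aux_integrable (C := (2 * M ^ 2) * (2 * M ^ 2)) μ ((hYmeas p).mul (hYmeas q)) ?_
    filter_upwards [hYbdd p, hYbdd q] with ω h1 h2
    calc |Y p ω * Y q ω| = |Y p ω| * |Y q ω| := abs_mul _ _
      _ ≤ (2 * M ^ 2) * (2 * M ^ 2) :=
        mul_le_mul h1 h2 (abs_nonneg _) ((abs_nonneg _).trans h1)
  set S : Ω → ℝ := fun ω => ∑ p ∈ P, X p ω with hSdef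
  have hSeq : (fun ω => ∑ i, ∑ j ∈ D i, U i ω * U j ω) = S := by
    funext ω
    rw [hSdef]
    exact (aux_sum_pairs D (fun p => U p.1 ω * U p.2 ω)).symm
  have hSmeas : Measurable S := Finset.measurable_sum P (fun p _ => hXmeas p)
  have hSbdd : ∀ᵐ ω ∂μ, |S ω| ≤ (P.card : ℝ) * M ^ 2 := by
    have : ∀ᵐ ω ∂μ, ∀ p ∈ P, |X p ω| ≤ M ^ 2 :=
      (ae_all_iff.2 hXbdd).mono fun ω h p _ => h p
    filter_upwards [this] with ω hω
    calc |S ω| ≤ ∑ p ∈ P, |X p ω| := Finset.abs_sum_le_sum_abs _ _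
      _ ≤ P.card • (M ^ 2) := Finset.sum_le_card_nsmul _ _ _ hω
      _ = (P.card : ℝ) * M ^ 2 := by simp [nsmul_eq_mul]
  have hSmem : MemLp S 2 μ :=
    (memLp_top_of_bound hSmeas.aestronglyMeasurable _
      (hSbdd.mono fun ω h => by simpa [Real.norm_eq_abs] using h)).mono_exponent
      le_top
  have hES : ∫ ω, S ω ∂μ = ∑ p ∈ P, ∫ ω, X p ω ∂μ :=
    integral_finset_sum P (fun p _ => hXint p)
  have hvar : variance S μ = ∑ p ∈ P, ∑ q ∈ P, covar μ (X p) (X q) := by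
    rw [variance_eq_integral hSmeas.aemeasurable]
    have step1 : ∀ ω, ((S - fun _ => ∫ ω', S ω' ∂μ : Ω → ℝ) ^ (2 : ℕ)) ω
        = ∑ p ∈ P, ∑ q ∈ P, Y p ω * Y q ω := by
      intro ω
      have h1 : S ω - ∫ ω', S ω' ∂μ = ∑ p ∈ P, Y p ω := by
        rw [hES]
        simp only [hSdef, hYdef]
        rw [← Finset.sum_sub_distrib]
      simp only [Pi.pow_apply, Pi.sub_apply]
      rw [h1, sq, Finset.sum_mul_sum]
    calc (∫ ω, ((S - fun _ => ∫ ω', S ω' ∂μ : Ω → ℝ) ^ (2 : ℕ)) ω ∂μ)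
        = ∫ ω, ∑ p ∈ P, ∑ q ∈ P, Y p ω * Y q ω ∂μ :=
          integral_congr_ae (Filter.Eventually.of_forall step1)
      _ = ∑ p ∈ P, ∑ q ∈ P, ∫ ω, Y p ω * Y q ω ∂μ := by
          rw [integral_finset_sum P
            (fun p _ => integrable_finset_sum P (fun q _ => hYYint p q))]
          exact Finset.sum_congr rfl fun p _ =>
            integral_finset_sum P (fun q _ => hYYint p q)
      _ = ∑ p ∈ P, ∑ q ∈ P, covar μ (X p) (X q) := rfl
  have hM4 : (0 : ℝ) ≤ M ^ 4 := by positivity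
  -- pointwise covariance bound
  have hcov_le : ∀ p q : Fin n × Fin n, covar μ (X p) (X q) ≤ 2 * M ^ 4 := by
    intro p q
    have := aux_abs_covar_le μ (hXmeas p) (hXmeas q) (hXbdd p) (hXbdd q)
    have h2 : (2 : ℝ) * (M ^ 2) ^ 2 = 2 * M ^ 4 := by ring
    exact (le_abs_self _).trans (h2 ▸ this)
  -- counting bound
  have hPmem : ∀ q : Fin n × Fin n, q ∈ P ↔ q.2 ∈ D q.1 := by
    intro q; simp [hP]
  have key : ∀ p ∈ P, ∑ q ∈ P, covar μ (X p) (X q)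
      ≤ 2 * M ^ 4 * (2 * ∑ k ∈ D p.1 ∪ D p.2, ((D k).card : ℝ)) := by
    intro p hp
    set A := D p.1 ∪ D p.2 with hA
    set Q := P.filter (fun q : Fin n × Fin n => ¬ Disjoint A ({q.1, q.2} : Finset (Fin n)))
      with hQ
    have hzero : ∑ q ∈ P, covar μ (X p) (X q) = ∑ q ∈ Q, covar μ (X p) (X q) := by
      rw [hQ]
      refine (Finset.sum_filter_of_ne ?_).symm
      intro q hq hne
      by_contra hdisj
      exact hne (hcov p.1 p.2 q.1 q.2 ((hPmem p).1 hp) ((hPmem q).1 hq)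
        hdisj)
    have hcardQ : (Q.card : ℝ) ≤ 2 * ∑ k ∈ A, ((D k).card : ℝ) := by
      have hsub : Q ⊆ A.biUnion (fun k => {k} ×ˢ D k) ∪ A.biUnion (fun k => D k ×ˢ {k}) := by
        intro q hq
        rw [hQ, Finset.mem_filter] at hq
        obtain ⟨hqP, hnd⟩ := hq
        have hq2 : q.2 ∈ D q.1 := (hPmem q).1 hqP
        obtain ⟨x, hxA, hx2⟩ := Finset.not_disjoint_iff.1 hnd
        simp only [Finset.mem_insert, Finset.mem_singleton] at hx2
        rcases hx2 with rfl | rfl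
        · refine Finset.mem_union_left _ (Finset.mem_biUnion.2 ⟨q.1, hxA, ?_⟩)
          rw [Finset.mem_product]
          exact ⟨Finset.mem_singleton_self _, hq2⟩
        · refine Finset.mem_union_right _ (Finset.mem_biUnion.2 ⟨q.2, hxA, ?_⟩)
          rw [Finset.mem_product]
          exact ⟨(hsym q.1 q.2).1 hq2, Finset.mem_singleton_self _⟩
      have hcard1 : (A.biUnion (fun k => ({k} : Finset (Fin n)) ×ˢ D k)).card
          ≤ ∑ k ∈ A, (D k).card := by
        refine (Finset.card_biUnion_le).trans ?_
        refine Finset.sum_le_sum fun k _ => ?_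
        rw [Finset.card_product, Finset.card_singleton, one_mul]
      have hcard2 : (A.biUnion (fun k => D k ×ˢ ({k} : Finset (Fin n)))).card
          ≤ ∑ k ∈ A, (D k).card := by
        refine (Finset.card_biUnion_le).trans ?_
        refine Finset.sum_le_sum fun k _ => ?_
        rw [Finset.card_product, Finset.card_singleton, mul_one]
      have : Q.card ≤ 2 * ∑ k ∈ A, (D k).card := by
        calc Q.card ≤ _ := Finset.card_le_card hsub
          _ ≤ _ + _ := Finset.card_union_le _ _
          _ ≤ ∑ k ∈ A, (D k).card + ∑ k ∈ A, (D k).card := add_le_add hcard1 hcard2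
          _ = 2 * ∑ k ∈ A, (D k).card := by ring
      calc (Q.card : ℝ) ≤ ((2 * ∑ k ∈ A, (D k).card : ℕ) : ℝ) := by exact_mod_cast this
        _ = 2 * ∑ k ∈ A, ((D k).card : ℝ) := by push_cast; ring
    calc ∑ q ∈ P, covar μ (X p) (X q) = ∑ q ∈ Q, covar μ (X p) (X q) := hzero
      _ ≤ Q.card • (2 * M ^ 4) :=
          Finset.sum_le_card_nsmul _ _ _ (fun q _ => hcov_le p q)
      _ = (Q.card : ℝ) * (2 * M ^ 4) := by simp [nsmul_eq_mul]
      _ ≤ (2 * ∑ k ∈ A, ((D k).card : ℝ)) * (2 * M ^ 4) := by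
          refine mul_le_mul_of_nonneg_right hcardQ (by positivity)
      _ = 2 * M ^ 4 * (2 * ∑ k ∈ A, ((D k).card : ℝ)) := by ring
  rw [hSeq, hvar]
  calc ∑ p ∈ P, ∑ q ∈ P, covar μ (X p) (X q)
      ≤ ∑ p ∈ P, 2 * M ^ 4 * (2 * ∑ k ∈ D p.1 ∪ D p.2, ((D k).card : ℝ)) :=
        Finset.sum_le_sum key
    _ = ∑ p ∈ P, 4 * M ^ 4 * ∑ k ∈ D p.1 ∪ D p.2, ((D k).card : ℝ) := by
        refine Finset.sum_congr rfl fun p _ => by ring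
    _ = 4 * M ^ 4 * ∑ p ∈ P, ∑ k ∈ D p.1 ∪ D p.2, ((D k).card : ℝ) := by
        rw [Finset.mul_sum]
    _ = 4 * M ^ 4 * ∑ i, ∑ j ∈ D i, ∑ k ∈ D i ∪ D j, ((D k).card : ℝ) := by
        rw [hP, aux_sum_pairs D (fun p => ∑ k ∈ D p.1 ∪ D p.2, ((D k).card : ℝ))]
end

section
/- Let (Ω, ℱ, μ) be a probability space, let S be a standard Borel space, let C : Ω → S be measurable, let Z_n : Ω → ℝ be a sequence of random variables, and let g_n : S → ℝ be measurable functions with W_n := g_n ∘ C. Suppose that (i) for every x₁ ∈ ℝ, for (μ ∘ C⁻¹)-almost every c ∈ S, P(Z_n ≤ x₁ | C = c) → Φ(x₁) as n → ∞, and (ii) for every x₂ ∈ ℝ, μ{W_n ≤ x₂} → Φ(x₂) as n → ∞. Then for every (x₁, x₂) ∈ ℝ², μ{Z_n ≤ x₁ and W_n ≤ x₂} → Φ(x₁)·Φ(x₂) as n → ∞; that is, (Z_n, W_n) converges in distribution to a pair of independent standard normal random variables. -/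
open MeasureTheory ProbabilityTheory Filter

/-- The cumulative distribution function of the standard normal distribution. -/
noncomputable def stdNormalCDF (x : ℝ) : ℝ :=
  ((gaussianReal 0 1) (Set.Iic x)).toReal

theorem stmt_8 {Ω S : Type} [MeasurableSpace Ω]
    [MeasurableSpace S] [StandardBorelSpace S]
    (μ : Measure Ω) [IsProbabilityMeasure μ]
    (C : Ω → S) (hC : Measurable C)
    (Z : ℕ → Ω → ℝ) (hZ : ∀ n, Measurable (Z n))
    (g : ℕ → S → ℝ) (hg : ∀ n, Measurable (g n))
    (hcond : ∀ x₁ : ℝ, ∀ᵐ c ∂(μ.map C),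
      Tendsto (fun n => ((condDistrib (Z n) C μ) c (Set.Iic x₁)).toReal) atTop
        (nhds (stdNormalCDF x₁)))
    (hW : ∀ x₂ : ℝ, Tendsto (fun n => (μ {ω | g n (C ω) ≤ x₂}).toReal) atTop
        (nhds (stdNormalCDF x₂))) :
    ∀ x₁ x₂ : ℝ, Tendsto
      (fun n => (μ {ω | Z n ω ≤ x₁ ∧ g n (C ω) ≤ x₂}).toReal) atTop
      (nhds (stdNormalCDF x₁ * stdNormalCDF x₂)) := by
  intro x₁ x₂
  set ν : Measure S := μ.map C with hν
  haveI : IsProbabilityMeasure ν := Measure.isProbabilityMeasure_map hC.aemeasurable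
  set f : ℕ → S → ℝ := fun n c => ((condDistrib (Z n) C μ) c (Set.Iic x₁)).toReal with hf
  set B : ℕ → Set S := fun n => (g n) ⁻¹' Set.Iic x₂ with hB
  have hBmeas : ∀ n, MeasurableSet (B n) := fun n => (hg n) measurableSet_Iic
  have hfmeas : ∀ n, Measurable (f n) := fun n =>
    (Kernel.measurable_coe _ measurableSet_Iic).ennreal_toReal
  have hf01 : ∀ n c, 0 ≤ f n c ∧ f n c ≤ 1 := by
    intro n c
    constructor
    · exact ENNReal.toReal_nonneg
    · exact ENNReal.toReal_le_of_le_ofReal one_pos.le (by simpa using prob_le_one)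
  -- Step 1: rewrite the probability as a set integral over ν
  have key : ∀ n, (μ {ω | Z n ω ≤ x₁ ∧ g n (C ω) ≤ x₂}).toReal
      = ∫ c in B n, f n c ∂ν := by
    intro n
    have hset : {ω | Z n ω ≤ x₁ ∧ g n (C ω) ≤ x₂}
        = C ⁻¹' (B n) ∩ (Z n) ⁻¹' Set.Iic x₁ := by
      ext ω; simp [hB, and_comm]
    have h1 : μ {ω | Z n ω ≤ x₁ ∧ g n (C ω) ≤ x₂}
        = ∫⁻ ω in C ⁻¹' (B n), (condDistrib (Z n) C μ) (C ω) (Set.Iic x₁) ∂μ := by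
      rw [hset, ← setLIntegral_preimage_condDistrib hC (hZ n).aemeasurable
        measurableSet_Iic (hBmeas n)]
    have h2 : ∫⁻ c in B n, (condDistrib (Z n) C μ) c (Set.Iic x₁) ∂ν
        = ∫⁻ ω in C ⁻¹' (B n), (condDistrib (Z n) C μ) (C ω) (Set.Iic x₁) ∂μ := by
      rw [hν, Measure.restrict_map hC (hBmeas n),
        lintegral_map (Kernel.measurable_coe _ measurableSet_Iic) hC]
    rw [h1, ← h2]
    rw [integral_toReal]
    · exact ((Kernel.measurable_coe _ measurableSet_Iic).aemeasurable).restrict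
    · exact Filter.Eventually.of_forall fun c => lt_of_le_of_lt prob_le_one ENNReal.one_lt_top
  simp only [key]
  -- nonnegativity and bounds for stdNormalCDF
  have hΦ1 : 0 ≤ stdNormalCDF x₁ ∧ stdNormalCDF x₁ ≤ 1 := by
    constructor
    · exact ENNReal.toReal_nonneg
    · exact ENNReal.toReal_le_of_le_ofReal one_pos.le (by simpa using prob_le_one)
  -- integrability facts
  have hint : ∀ n, Integrable (f n) ν := by
    intro n
    refine (integrable_const (1 : ℝ)).mono' (hfmeas n).aestronglyMeasurable ?_
    exact Filter.Eventually.of_forall fun c => by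
      rw [Real.norm_eq_abs, abs_of_nonneg (hf01 n c).1]; exact (hf01 n c).2
  have hintd : ∀ n, Integrable (fun c => |f n c - stdNormalCDF x₁|) ν := by
    intro n
    refine (integrable_const (2 : ℝ)).mono' ?_ ?_
    · exact ((hfmeas n).sub measurable_const).abs.aestronglyMeasurable
    · refine Filter.Eventually.of_forall fun c => ?_
      rw [Real.norm_eq_abs, abs_abs]
      calc |f n c - stdNormalCDF x₁| ≤ |f n c| + |stdNormalCDF x₁| := abs_sub _ _
        _ ≤ 1 + 1 := by
            gcongr
            · rw [abs_of_nonneg (hf01 n c).1]; exact (hf01 n c).2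
            · rw [abs_of_nonneg hΦ1.1]; exact hΦ1.2
        _ = 2 := by norm_num
  -- L¹ convergence of f n to the constant
  have hL1 : Tendsto (fun n => ∫ c, |f n c - stdNormalCDF x₁| ∂ν) atTop (nhds 0) := by
    have := tendsto_integral_of_dominated_convergence (μ := ν) (fun _ => (2 : ℝ))
      (fun n => ((hfmeas n).sub measurable_const).abs.aestronglyMeasurable)
      (integrable_const 2)
      (fun n => Filter.Eventually.of_forall fun c => by
        rw [Real.norm_eq_abs, abs_abs]
        calc |f n c - stdNormalCDF x₁| ≤ |f n c| + |stdNormalCDF x₁| := abs_sub _ _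
          _ ≤ 1 + 1 := by
              gcongr
              · rw [abs_of_nonneg (hf01 n c).1]; exact (hf01 n c).2
              · rw [abs_of_nonneg hΦ1.1]; exact hΦ1.2
          _ = 2 := by norm_num)
      (f := fun _ => (0 : ℝ)) ?_
    · simpa using this
    · filter_upwards [hcond x₁] with c hc
      have : Tendsto (fun n => f n c - stdNormalCDF x₁) atTop (nhds 0) := by
        simpa using hc.sub (tendsto_const_nhds (x := stdNormalCDF x₁))
      simpa using this.abs
  -- the perturbation term tends to 0
  have hpert : Tendsto (fun n => ∫ c in B n, (f n c - stdNormalCDF x₁) ∂ν) atTop (nhds 0) := by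
    refine squeeze_zero_norm (fun n => ?_) hL1
    calc ‖∫ c in B n, (f n c - stdNormalCDF x₁) ∂ν‖
        ≤ ∫ c in B n, ‖f n c - stdNormalCDF x₁‖ ∂ν := norm_integral_le_integral_norm _
      _ ≤ ∫ c, ‖f n c - stdNormalCDF x₁‖ ∂ν := by
          refine setIntegral_le_integral ?_ ?_
          · simpa [Real.norm_eq_abs] using hintd n
          · exact Filter.Eventually.of_forall fun c => norm_nonneg _
      _ = ∫ c, |f n c - stdNormalCDF x₁| ∂ν := by simp [Real.norm_eq_abs]
  -- ν (B n) tends to stdNormalCDF x₂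
  have hνB : Tendsto (fun n => (ν (B n)).toReal) atTop (nhds (stdNormalCDF x₂)) := by
    have : ∀ n, ν (B n) = μ {ω | g n (C ω) ≤ x₂} := by
      intro n
      rw [hν, Measure.map_apply hC (hBmeas n)]
      rfl
    simpa only [this] using hW x₂
  -- combine
  have hdecomp : ∀ n, ∫ c in B n, f n c ∂ν
      = (∫ c in B n, (f n c - stdNormalCDF x₁) ∂ν) + stdNormalCDF x₁ * (ν (B n)).toReal := by
    intro n
    have h1 : Integrable (fun c => f n c - stdNormalCDF x₁) (ν.restrict (B n)) :=
      ((hint n).sub (integrable_const _)).restrict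
    have h2 : Integrable (fun _ : S => stdNormalCDF x₁) (ν.restrict (B n)) :=
      integrable_const _
    have : ∫ c in B n, f n c ∂ν
        = ∫ c in B n, ((f n c - stdNormalCDF x₁) + stdNormalCDF x₁) ∂ν := by
      congr 1; ext c; ring
    rw [this, integral_add h1 h2, setIntegral_const, smul_eq_mul, mul_comm]
    rfl
  simp only [hdecomp]
  have := hpert.add ((hνB.const_mul (stdNormalCDF x₁)))
  simpa using this
end

section
/- Let (Ω, ℱ, μ) be a probability space, let S be a standard Borel space, let C : Ω → S be measurable, let Z_n : Ω → ℝ be a sequence of random variables, and let g_n : S → ℝ be measurable functions with W_n := g_n ∘ C. Suppose that (i) for every x₁ ∈ ℝ, for (μ ∘ C⁻¹)-almost every c ∈ S, P(Z_n ≤ x₁ | C = c) → Φ(x₁) as n → ∞, and (ii) for every x₂ ∈ ℝ, μ{W_n ≤ x₂} → Φ(x₂) as n → ∞. Then Z_n + W_n converges in distribution to a normal random variable with mean 0 and variance 2; equivalently, for every x ∈ ℝ, μ{Z_n + W_n ≤ x} → Φ(x/√2) as n → ∞. -/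
open MeasureTheory ProbabilityTheory Filter

lemma phi_nonneg (x : ℝ) : 0 ≤ stdNormalCDF x := ENNReal.toReal_nonneg

lemma phi_le_one (x : ℝ) : stdNormalCDF x ≤ 1 := by
  rw [stdNormalCDF]
  exact ENNReal.toReal_le_of_le_ofReal zero_le_one (by simpa using prob_le_one)

lemma phi_mono : Monotone stdNormalCDF := by
  intro a b hab
  exact ENNReal.toReal_mono (measure_ne_top _ _) (measure_mono (Set.Iic_subset_Iic.2 hab))

lemma gaussianPDF_le_one (x : ℝ) : gaussianPDF 0 1 x ≤ 1 := by
  rw [gaussianPDF]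
  refine ENNReal.ofReal_le_one.2 ?_
  rw [gaussianPDFReal]
  have h1 : Real.exp (- (x - 0)^2 / (2 * (1:NNReal))) ≤ 1 := by
    rw [Real.exp_le_one_iff]
    have : (0:ℝ) ≤ (x - 0)^2 := sq_nonneg _
    have h2 : (0:ℝ) < 2 * (1:NNReal) := by norm_num
    exact div_nonpos_of_nonpos_of_nonneg (by linarith) h2.le
  have h2 : (Real.sqrt (2 * Real.pi * (1:NNReal)))⁻¹ ≤ 1 := by
    rw [inv_le_one₀ (Real.sqrt_pos.2 (by positivity))]
    rw [show ((1:ℝ)) = Real.sqrt 1 from (Real.sqrt_one).symm]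
    refine Real.sqrt_le_sqrt ?_
    have := Real.pi_gt_three
    push_cast
    nlinarith
  calc (Real.sqrt (2 * Real.pi * (1:NNReal)))⁻¹ * Real.exp (- (x - 0)^2 / (2 * (1:NNReal)))
      ≤ 1 * 1 := mul_le_mul h2 h1 (Real.exp_nonneg _) zero_le_one
    _ = 1 := by ring

lemma phi_lipschitz : LipschitzWith 1 stdNormalCDF := by
  refine LipschitzWith.of_dist_le_mul fun a b => ?_
  wlog hab : b ≤ a generalizing a b
  · rw [dist_comm, dist_comm a b]; exact this b a (le_of_not_ge hab)
  have key : ∀ u v : ℝ, v ≤ u → stdNormalCDF u - stdNormalCDF v ≤ u - v := by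
    intro u v huv
    have hsplit : (gaussianReal 0 1) (Set.Iic u)
        = (gaussianReal 0 1) (Set.Iic v) + (gaussianReal 0 1) (Set.Ioc v u) := by
      rw [← measure_union (Set.Iic_disjoint_Ioc le_rfl) measurableSet_Ioc,
        Set.Iic_union_Ioc_eq_Iic huv]
    have hIoc : (gaussianReal 0 1) (Set.Ioc v u) ≤ ENNReal.ofReal (u - v) := by
      rw [gaussianReal_apply 0 one_ne_zero]
      calc ∫⁻ x in Set.Ioc v u, gaussianPDF 0 1 x
          ≤ ∫⁻ _ in Set.Ioc v u, 1 := setLIntegral_mono measurable_const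
            (fun x _ => gaussianPDF_le_one x)
        _ = volume (Set.Ioc v u) := by simp
        _ = ENNReal.ofReal (u - v) := by rw [Real.volume_Ioc]
    rw [stdNormalCDF, stdNormalCDF, hsplit,
      ENNReal.toReal_add (measure_ne_top _ _) (measure_ne_top _ _)]
    have := ENNReal.toReal_mono ENNReal.ofReal_ne_top hIoc
    rw [ENNReal.toReal_ofReal (by linarith)] at this
    linarith
  rw [Real.dist_eq, Real.dist_eq, NNReal.coe_one, one_mul,
    abs_of_nonneg (by linarith [phi_mono hab] : (0:ℝ) ≤ stdNormalCDF a - stdNormalCDF b),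
    abs_of_nonneg (by linarith : (0:ℝ) ≤ a - b)]
  exact key a b hab

lemma phi_continuous : Continuous stdNormalCDF := phi_lipschitz.continuous

lemma phi_exists_lt {δ : ℝ} (hδ : 0 < δ) : ∃ a : ℝ, stdNormalCDF a < δ := by
  have h1 : Tendsto (fun n : ℕ => (gaussianReal 0 1) (Set.Iic (-(n:ℝ)))) atTop
      (nhds ((gaussianReal 0 1) (⋂ n : ℕ, Set.Iic (-(n:ℝ))))) := by
    refine tendsto_measure_iInter_atTop (fun n => (measurableSet_Iic).nullMeasurableSet)
      (fun m n hmn => Set.Iic_subset_Iic.2 (by exact_mod_cast neg_le_neg (Nat.cast_le.2 hmn : (m:ℝ) ≤ n)))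
      ⟨0, measure_ne_top _ _⟩
  have h2 : (⋂ n : ℕ, Set.Iic (-(n:ℝ))) = ∅ := by
    ext y
    simp only [Set.mem_iInter, Set.mem_Iic, Set.mem_empty_iff_false, iff_false, not_forall]
    obtain ⟨n, hn⟩ := exists_nat_gt (-y)
    exact ⟨n, by push_cast; linarith⟩
  rw [h2, measure_empty] at h1
  have h3 : Tendsto (fun n : ℕ => stdNormalCDF (-(n:ℝ))) atTop (nhds 0) := by
    have := (ENNReal.tendsto_toReal ENNReal.zero_ne_top).comp h1
    simpa [stdNormalCDF, Function.comp_def] using this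
  obtain ⟨n, hn⟩ := (h3.eventually (eventually_lt_nhds hδ)).exists
  exact ⟨-(n:ℝ), hn⟩

lemma phi_exists_gt {δ : ℝ} (hδ : 0 < δ) : ∃ b : ℝ, 1 - δ < stdNormalCDF b := by
  have h1 : Tendsto (fun n : ℕ => (gaussianReal 0 1) (Set.Iic (n:ℝ))) atTop
      (nhds ((gaussianReal 0 1) (⋃ n : ℕ, Set.Iic (n:ℝ)))) := by
    exact tendsto_measure_iUnion_atTop
      (fun m n hmn => Set.Iic_subset_Iic.2 (Nat.cast_le.2 hmn))
  have h2 : (⋃ n : ℕ, Set.Iic (n:ℝ)) = Set.univ := by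
    ext y
    simp only [Set.mem_iUnion, Set.mem_Iic, Set.mem_univ, iff_true]
    obtain ⟨n, hn⟩ := exists_nat_gt y
    exact ⟨n, hn.le⟩
  rw [h2, measure_univ] at h1
  have h3 : Tendsto (fun n : ℕ => stdNormalCDF (n:ℝ)) atTop (nhds 1) := by
    have := (ENNReal.tendsto_toReal ENNReal.one_ne_top).comp h1
    simpa [stdNormalCDF, Function.comp_def] using this
  obtain ⟨n, hn⟩ := (h3.eventually (eventually_gt_nhds (by linarith : 1 - δ < 1))).exists
  exact ⟨(n:ℝ), hn⟩

lemma phi_surj {y : ℝ} (h0 : 0 < y) (h1 : y < 1) : ∃ r : ℝ, stdNormalCDF r = y := by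
  obtain ⟨a, ha⟩ := phi_exists_lt h0
  obtain ⟨b, hb⟩ := phi_exists_gt (by linarith : (0:ℝ) < 1 - y)
  have hb' : y < stdNormalCDF b := by linarith
  have hab : a ≤ b := by
    by_contra h
    exact absurd (phi_mono (le_of_not_ge h)) (by linarith)
  have := intermediate_value_Icc hab phi_continuous.continuousOn
  obtain ⟨r, _, hr⟩ := this ⟨ha.le, hb'.le⟩
  exact ⟨r, hr⟩

noncomputable def gridPt (k i : ℕ) : ℝ :=
  if h : 0 < (i:ℝ)/(k:ℝ) ∧ (i:ℝ)/(k:ℝ) < 1 then Classical.choose (phi_surj h.1 h.2) else 0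

lemma gridPt_spec {k i : ℕ} (hk : 2 ≤ k) (hi1 : 1 ≤ i) (hi2 : i ≤ k - 1) :
    stdNormalCDF (gridPt k i) = (i:ℝ)/(k:ℝ) := by
  have hkpos : (0:ℝ) < k := by exact_mod_cast (by omega : 0 < k)
  have h0 : 0 < (i:ℝ)/(k:ℝ) := by
    apply div_pos _ hkpos
    exact_mod_cast hi1
  have h1 : (i:ℝ)/(k:ℝ) < 1 := by
    rw [div_lt_one hkpos]
    exact_mod_cast (by omega : i < k)
  rw [gridPt, dif_pos ⟨h0, h1⟩]
  exact Classical.choose_spec (phi_surj h0 h1)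

lemma key_est (f : ℝ → ℝ) (hf : Monotone f) (h0 : ∀ t, 0 ≤ f t) (h1 : ∀ t, f t ≤ 1)
    (k : ℕ) (hk : 2 ≤ k) (δ : ℝ) (hδ : 0 ≤ δ)
    (hclose : ∀ i, 1 ≤ i → i ≤ k - 1 → |f (gridPt k i) - stdNormalCDF (gridPt k i)| ≤ δ)
    (s : ℝ) : |f s - stdNormalCDF s| ≤ 2*δ + 1/k := by
  have hkpos : (0:ℝ) < k := by exact_mod_cast (by omega : 0 < k)
  have habs : ∀ i, 1 ≤ i → i ≤ k - 1 →
      (i:ℝ)/k - δ ≤ f (gridPt k i) ∧ f (gridPt k i) ≤ (i:ℝ)/k + δ := by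
    intro i hi1 hi2
    have := abs_sub_le_iff.1 (hclose i hi1 hi2)
    rw [gridPt_spec hk hi1 hi2] at this
    constructor <;> linarith [this.1, this.2]
  set I := (Finset.Icc 1 (k-1)).filter (fun i => gridPt k i ≤ s) with hIdef
  by_cases hI : I.Nonempty
  · set i := I.max' hI with hi
    have hiI : i ∈ I := I.max'_mem hI
    obtain ⟨hiIcc, his⟩ := Finset.mem_filter.1 hiI
    obtain ⟨hi1, hi2⟩ := Finset.mem_Icc.1 hiIcc
    have hlow_f : (i:ℝ)/k - δ ≤ f s := le_trans (habs i hi1 hi2).1 (hf his)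
    have hlow_p : (i:ℝ)/k ≤ stdNormalCDF s := by
      rw [← gridPt_spec hk hi1 hi2]; exact phi_mono his
    have hup : f s ≤ ((i:ℝ)+1)/k + δ ∧ stdNormalCDF s ≤ ((i:ℝ)+1)/k := by
      by_cases hi3 : i + 1 ≤ k - 1
      · have hnotmem : i + 1 ∉ I := fun hmem => absurd (I.le_max' _ hmem) (by omega)
        have : ¬ gridPt k (i+1) ≤ s := fun h =>
          hnotmem (Finset.mem_filter.2 ⟨Finset.mem_Icc.2 ⟨by omega, hi3⟩, h⟩)
        have hs : s ≤ gridPt k (i+1) := (lt_of_not_ge this).le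
        have h4 := (habs (i+1) (by omega) hi3).2
        have h5 : stdNormalCDF s ≤ ((i:ℝ)+1)/k := by
          rw [show ((i:ℝ)+1) = ((i+1 : ℕ):ℝ) by push_cast; ring,
            ← gridPt_spec hk (by omega) hi3]
          exact phi_mono hs
        constructor
        · refine le_trans (hf hs) ?_
          rw [show ((i:ℝ)+1) = ((i+1 : ℕ):ℝ) by push_cast; ring]
          exact h4
        · exact h5
      · have hik : i = k - 1 := by omega
        have : ((i:ℝ)+1)/k = 1 := by
          rw [hik, Nat.cast_sub (by omega : 1 ≤ k)]
          field_simp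
          linarith [Nat.cast_one (R := ℝ)]
        rw [this]
        exact ⟨by linarith [h1 s], phi_le_one s⟩
    have hstep : ((i:ℝ)+1)/k = (i:ℝ)/k + 1/k := by field_simp
    rw [abs_sub_le_iff]
    constructor <;> [skip; skip] <;>
      (try linarith [hup.1, hup.2, hlow_f, hlow_p, hstep]) 
  · have h1mem : (1:ℕ) ∈ Finset.Icc 1 (k-1) := Finset.mem_Icc.2 ⟨le_rfl, by omega⟩
    have : ¬ gridPt k 1 ≤ s := fun h =>
      hI ⟨1, Finset.mem_filter.2 ⟨h1mem, h⟩⟩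
    have hs : s ≤ gridPt k 1 := (lt_of_not_ge this).le
    have h4 := (habs 1 le_rfl (by omega)).2
    have hfs : f s ≤ (1:ℝ)/k + δ := by
      refine le_trans (hf hs) ?_; simpa using h4
    have hps : stdNormalCDF s ≤ (1:ℝ)/k := by
      have := phi_mono hs
      rw [gridPt_spec hk le_rfl (by omega)] at this
      simpa using this
    rw [abs_sub_le_iff]
    constructor <;> linarith [h0 s, phi_nonneg s]

lemma polya_tendsto (f : ℕ → ℝ → ℝ) (hf : ∀ n, Monotone (f n))
    (h0 : ∀ n t, 0 ≤ f n t) (h1 : ∀ n t, f n t ≤ 1)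
    (hconv : ∀ k i : ℕ, Tendsto (fun n => f n (gridPt k i)) atTop
      (nhds (stdNormalCDF (gridPt k i))))
    (t : ℕ → ℝ) :
    Tendsto (fun n => f n (t n) - stdNormalCDF (t n)) atTop (nhds 0) := by
  rw [Metric.tendsto_nhds]
  intro ε hε
  set k : ℕ := max 2 ⌈4/ε⌉₊ with hkdef
  have hk2 : 2 ≤ k := le_max_left _ _
  have hkpos : (0:ℝ) < k := by exact_mod_cast (by omega : 0 < k)
  have hk4 : 4/ε ≤ (k:ℝ) := le_trans (Nat.le_ceil _) (Nat.cast_le.2 (le_max_right _ _))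
  have hinv : 1/(k:ℝ) ≤ ε/4 := by
    rw [div_le_div_iff₀ hkpos (by norm_num : (0:ℝ) < 4)]
    nlinarith [(div_le_iff₀ hε).1 hk4]
  set δ : ℝ := ε/4 with hδdef
  have hδpos : 0 < δ := by positivity
  have hev : ∀ᶠ n in atTop, ∀ i ∈ Finset.Icc 1 (k-1),
      |f n (gridPt k i) - stdNormalCDF (gridPt k i)| ≤ δ := by
    rw [Filter.eventually_all_finset]
    intro i _
    have := Metric.tendsto_nhds.1 (hconv k i) δ hδpos
    filter_upwards [this] with n hn
    rw [Real.dist_eq] at hn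
    exact hn.le
  filter_upwards [hev] with n hn
  rw [Real.dist_eq, sub_zero]
  calc |f n (t n) - stdNormalCDF (t n)| ≤ 2*δ + 1/k := by
        refine key_est (f n) (hf n) (h0 n) (h1 n) k hk2 δ hδpos.le ?_ (t n)
        intro i hi1 hi2
        exact hn i (Finset.mem_Icc.2 ⟨hi1, hi2⟩)
    _ < ε := by rw [hδdef]; linarith


lemma gaussianPDFReal_le_one (x : ℝ) : gaussianPDFReal 0 1 x ≤ 1 := by
  rw [gaussianPDFReal]
  have h1 : Real.exp (- (x - 0)^2 / (2 * (1:NNReal))) ≤ 1 := by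
    rw [Real.exp_le_one_iff]
    have : (0:ℝ) ≤ (x - 0)^2 := sq_nonneg _
    have h2 : (0:ℝ) < 2 * (1:NNReal) := by norm_num
    exact div_nonpos_of_nonpos_of_nonneg (by linarith) h2.le
  have h2 : (Real.sqrt (2 * Real.pi * (1:NNReal)))⁻¹ ≤ 1 := by
    rw [inv_le_one₀ (Real.sqrt_pos.2 (by positivity))]
    rw [show ((1:ℝ)) = Real.sqrt 1 from (Real.sqrt_one).symm]
    refine Real.sqrt_le_sqrt ?_
    have := Real.pi_gt_three
    push_cast
    nlinarith
  calc (Real.sqrt (2 * Real.pi * (1:NNReal)))⁻¹ * Real.exp (- (x - 0)^2 / (2 * (1:NNReal)))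
      ≤ 1 * 1 := mul_le_mul h2 h1 (Real.exp_nonneg _) zero_le_one
    _ = 1 := by ring

lemma conv_pdf_real (w : ℝ) :
    ∫ z : ℝ, gaussianPDFReal 0 1 z * gaussianPDFReal 0 1 (w - z) = gaussianPDFReal 0 2 w := by
  have hπ : (0:ℝ) < Real.pi := Real.pi_pos
  set K : ℝ := (2 * Real.pi)⁻¹ * Real.exp (- w^2 / 4) with hK
  have hFeq : (fun z : ℝ => gaussianPDFReal 0 1 z * gaussianPDFReal 0 1 (w - z))
      = fun z => K * Real.exp (-(z - w/2)^2) := by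
    funext z
    rw [gaussianPDFReal, gaussianPDFReal, hK]
    rw [NNReal.coe_one, mul_one, mul_one]
    have hs : (Real.sqrt (2 * Real.pi))⁻¹ * (Real.sqrt (2 * Real.pi))⁻¹ = (2 * Real.pi)⁻¹ := by
      rw [← mul_inv, Real.mul_self_sqrt (by positivity)]
    calc (Real.sqrt (2 * Real.pi))⁻¹ * Real.exp (- (z - 0)^2 / 2) *
          ((Real.sqrt (2 * Real.pi))⁻¹ * Real.exp (- (w - z - 0)^2 / 2))
        = ((Real.sqrt (2 * Real.pi))⁻¹ * (Real.sqrt (2 * Real.pi))⁻¹) *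
          (Real.exp (- (z - 0)^2 / 2) * Real.exp (- (w - z - 0)^2 / 2)) := by ring
      _ = (2 * Real.pi)⁻¹ * Real.exp (- (z - 0)^2 / 2 + - (w - z - 0)^2 / 2) := by
          rw [hs, Real.exp_add]
      _ = (2 * Real.pi)⁻¹ * (Real.exp (- w^2 / 4) * Real.exp (-(z - w/2)^2)) := by
          rw [← Real.exp_add]; ring_nf
      _ = (2 * Real.pi)⁻¹ * Real.exp (- w^2 / 4) * Real.exp (-(z - w/2)^2) := by ring
  rw [hFeq, integral_const_mul]
  have hshift : ∫ z : ℝ, Real.exp (-(z - w/2)^2) = ∫ z : ℝ, Real.exp (-z^2) :=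
    integral_sub_right_eq_self (fun u => Real.exp (-u^2)) (w/2)
  have hgauss : ∫ z : ℝ, Real.exp (-z^2) = Real.sqrt Real.pi := by
    have := integral_gaussian (1:ℝ)
    simp only [neg_mul, one_mul, div_one] at this
    rw [this]
  rw [hshift, hgauss, gaussianPDFReal]
  have h2 : ((2:NNReal):ℝ) = 2 := by norm_num
  rw [h2]
  have hsqrt : Real.sqrt (2 * Real.pi * 2) = 2 * Real.sqrt Real.pi := by
    rw [show (2 : ℝ) * Real.pi * 2 = 4 * Real.pi by ring, show (4:ℝ) = 2^2 by norm_num,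
      Real.sqrt_mul (by positivity), Real.sqrt_sq (by norm_num)]
  rw [hsqrt, hK]
  have hππ : Real.sqrt Real.pi * Real.sqrt Real.pi = Real.pi := Real.mul_self_sqrt hπ.le
  have hsp : (0:ℝ) < Real.sqrt Real.pi := Real.sqrt_pos.2 hπ
  rw [show - (w - 0)^2 / (2*2) = - w^2/4 by ring]
  have key : (2*Real.pi)⁻¹ * Real.sqrt Real.pi = (2*Real.sqrt Real.pi)⁻¹ := by
    have h1 : (2*Real.pi)⁻¹ * Real.sqrt Real.pi * (2 * Real.sqrt Real.pi) = 1 := by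
      calc (2*Real.pi)⁻¹ * Real.sqrt Real.pi * (2 * Real.sqrt Real.pi)
          = (2*Real.pi)⁻¹ * (2 * (Real.sqrt Real.pi * Real.sqrt Real.pi)) := by ring
        _ = 1 := by rw [hππ]; field_simp
    have h2' : (2 * Real.sqrt Real.pi) ≠ 0 := by positivity
    field_simp at h1 ⊢
    linarith [h1]
  calc (2 * Real.pi)⁻¹ * Real.exp (-w^2/4) * Real.sqrt Real.pi
      = ((2*Real.pi)⁻¹ * Real.sqrt Real.pi) * Real.exp (-w^2/4) := by ring
    _ = (2 * Real.sqrt Real.pi)⁻¹ * Real.exp (-w^2/4) := by rw [key]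

lemma conv_pdf (w : ℝ) :
    ∫⁻ z : ℝ, gaussianPDF 0 1 z * gaussianPDF 0 1 (w - z) = gaussianPDF 0 2 w := by
  have hmul : ∀ z : ℝ, gaussianPDF 0 1 z * gaussianPDF 0 1 (w - z)
      = ENNReal.ofReal (gaussianPDFReal 0 1 z * gaussianPDFReal 0 1 (w - z)) := by
    intro z
    rw [gaussianPDF, gaussianPDF, ← ENNReal.ofReal_mul (gaussianPDFReal_nonneg _ _ _)]
  simp_rw [hmul]
  have hFint : Integrable (fun z : ℝ => gaussianPDFReal 0 1 z * gaussianPDFReal 0 1 (w - z)) := by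
    refine (integrable_gaussianPDFReal 0 1).mono' ?_ ?_
    · exact ((measurable_gaussianPDFReal 0 1).mul
        ((measurable_gaussianPDFReal 0 1).comp (measurable_const.sub measurable_id))
        ).aestronglyMeasurable
    · refine Filter.Eventually.of_forall fun z => ?_
      rw [Real.norm_eq_abs, abs_of_nonneg (mul_nonneg (gaussianPDFReal_nonneg _ _ _)
        (gaussianPDFReal_nonneg _ _ _))]
      calc gaussianPDFReal 0 1 z * gaussianPDFReal 0 1 (w - z)
          ≤ gaussianPDFReal 0 1 z * 1 := mul_le_mul_of_nonneg_left
            (gaussianPDFReal_le_one _) (gaussianPDFReal_nonneg _ _ _)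
        _ = gaussianPDFReal 0 1 z := mul_one _
  rw [← ofReal_integral_eq_lintegral_ofReal hFint (Filter.Eventually.of_forall fun z => by
    exact mul_nonneg (gaussianPDFReal_nonneg _ _ _) (gaussianPDFReal_nonneg _ _ _)),
    conv_pdf_real, gaussianPDF]

lemma conv_iic (x : ℝ) :
    ∫⁻ z, (gaussianReal 0 1) (Set.Iic (x - z)) ∂(gaussianReal 0 1)
      = (gaussianReal 0 2) (Set.Iic x) := by
  have hpdf_shift : ∀ z w : ℝ, gaussianPDF z 1 w = gaussianPDF 0 1 (w - z) := by
    intro z w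
    simp [gaussianPDF, gaussianPDFReal]
  have h1 : ∀ z : ℝ, (gaussianReal 0 1) (Set.Iic (x - z))
      = ∫⁻ w in Set.Iic x, gaussianPDF 0 1 (w - z) := by
    intro z
    have hmap : (gaussianReal 0 1).map (· + z) = gaussianReal (0 + z) 1 :=
      gaussianReal_map_add_const z
    have h2 : (gaussianReal 0 1) (Set.Iic (x - z))
        = ((gaussianReal 0 1).map (· + z)) (Set.Iic x) := by
      rw [Measure.map_apply (measurable_add_const z) measurableSet_Iic]
      congr 1
      ext w
      simp only [Set.mem_preimage, Set.mem_Iic]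
      constructor <;> intro h <;> linarith
    rw [h2, hmap, zero_add, gaussianReal_apply z one_ne_zero]
    refine setLIntegral_congr_fun measurableSet_Iic (fun w _ => ?_)
    exact hpdf_shift z w
  have hmeas_inner : Measurable fun z => (gaussianReal 0 1) (Set.Iic (x - z)) := by
    refine Antitone.measurable fun a b hab => ?_
    exact measure_mono (Set.Iic_subset_Iic.2 (by linarith))
  have hγ : (gaussianReal 0 1 : Measure ℝ) = volume.withDensity (gaussianPDF 0 1) :=
    gaussianReal_of_var_ne_zero 0 one_ne_zero
  have hwd : ∫⁻ z, (gaussianReal 0 1) (Set.Iic (x - z)) ∂(gaussianReal 0 1)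
      = ∫⁻ z, (gaussianPDF 0 1 * fun z => (gaussianReal 0 1) (Set.Iic (x - z))) z ∂volume := by
    have hwd' := lintegral_withDensity_eq_lintegral_mul volume
      (measurable_gaussianPDF 0 1) hmeas_inner
    rw [← hγ] at hwd'
    exact hwd'
  rw [hwd]
  have hstep : ∀ z : ℝ, (gaussianPDF 0 1 * fun z => (gaussianReal 0 1) (Set.Iic (x - z))) z
      = ∫⁻ w in Set.Iic x, gaussianPDF 0 1 z * gaussianPDF 0 1 (w - z) := by
    intro z
    simp only [Pi.mul_apply]
    rw [h1 z]
    exact (lintegral_const_mul _ ((measurable_gaussianPDF 0 1).comp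
      (measurable_id.sub measurable_const))).symm
  simp_rw [hstep]
  rw [lintegral_lintegral_swap]
  · have : ∀ w : ℝ, ∫⁻ z, gaussianPDF 0 1 z * gaussianPDF 0 1 (w - z) = gaussianPDF 0 2 w :=
      conv_pdf
    simp_rw [this]
    rw [← gaussianReal_apply 0 (by norm_num : (2:NNReal) ≠ 0)]
  · refine (Measurable.mul (f := fun p : ℝ × ℝ => gaussianPDF 0 1 p.1)
      (g := fun p : ℝ × ℝ => gaussianPDF 0 1 (p.2 - p.1)) ?_ ?_).aemeasurable
    · exact (measurable_gaussianPDF 0 1).comp measurable_fst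
    · exact (measurable_gaussianPDF 0 1).comp (measurable_snd.sub measurable_fst)

lemma gaussian_two_iic (x : ℝ) :
    (gaussianReal 0 2) (Set.Iic x) = (gaussianReal 0 1) (Set.Iic (x / Real.sqrt 2)) := by
  have hs2 : (0:ℝ) < Real.sqrt 2 := Real.sqrt_pos.2 (by norm_num)
  have hmap : (gaussianReal 0 1).map (Real.sqrt 2 * ·) = gaussianReal 0 2 := by
    rw [gaussianReal_map_const_mul (Real.sqrt 2)]
    congr 1
    · ring
    · ext
      push_cast
      rw [Real.sq_sqrt (by norm_num : (0:ℝ) ≤ 2)]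
      norm_num
  rw [← hmap, Measure.map_apply (measurable_const_mul _) measurableSet_Iic]
  congr 1
  ext y
  simp only [Set.mem_preimage, Set.mem_Iic]
  rw [le_div_iff₀ hs2, mul_comm]

theorem stmt_9 {Ω S : Type} [MeasurableSpace Ω]
    [MeasurableSpace S] [StandardBorelSpace S]
    (μ : Measure Ω) [IsProbabilityMeasure μ]
    (C : Ω → S) (hC : Measurable C)
    (Z : ℕ → Ω → ℝ) (hZ : ∀ n, Measurable (Z n))
    (g : ℕ → S → ℝ) (hg : ∀ n, Measurable (g n))
    (hcond : ∀ x₁ : ℝ, ∀ᵐ c ∂(μ.map C),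
      Tendsto (fun n => ((condDistrib (Z n) C μ) c (Set.Iic x₁)).toReal) atTop
        (nhds (stdNormalCDF x₁)))
    (hW : ∀ x₂ : ℝ, Tendsto (fun n => (μ {ω | g n (C ω) ≤ x₂}).toReal) atTop
        (nhds (stdNormalCDF x₂))) :
    ∀ x : ℝ, Tendsto
      (fun n => (μ {ω | Z n ω + g n (C ω) ≤ x}).toReal) atTop
      (nhds (stdNormalCDF (x / Real.sqrt 2))) := by
  intro x
  set ν := μ.map C with hν
  have : IsProbabilityMeasure ν := Measure.isProbabilityMeasure_map hC.aemeasurable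
  set κ := fun n => condDistrib (Z n) C μ with hκ
  set γ := gaussianReal 0 1 with hγ
  -- Step 1: disintegration
  have hT : ∀ n, MeasurableSet {p : S × ℝ | p.2 + g n p.1 ≤ x} := fun n =>
    (measurable_snd.add ((hg n).comp measurable_fst)) measurableSet_Iic
  have hset : ∀ n, ∀ c : S, (Prod.mk c ⁻¹' {p : S × ℝ | p.2 + g n p.1 ≤ x})
      = Set.Iic (x - g n c) := by
    intro n c
    ext z
    simp only [Set.mem_preimage, Set.mem_setOf_eq, Set.mem_Iic]
    constructor <;> intro h <;> linarith
  have key1 : ∀ n, μ {ω | Z n ω + g n (C ω) ≤ x}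
      = ∫⁻ c, (κ n) c (Set.Iic (x - g n c)) ∂ν := by
    intro n
    have hpair : (μ.map fun ω => (C ω, Z n ω)) = ν ⊗ₘ κ n := by
      have hκn : κ n = (μ.map fun ω => (C ω, Z n ω)).condKernel := condDistrib_def _ _ _
      rw [hκn, hν, ← Measure.fst_map_prodMk (X := C) (hZ n)]
      exact (Measure.disintegrate _ _).symm
    calc μ {ω | Z n ω + g n (C ω) ≤ x}
        = (μ.map fun ω => (C ω, Z n ω)) {p : S × ℝ | p.2 + g n p.1 ≤ x} := by
          rw [Measure.map_apply (hC.prodMk (hZ n)) (hT n)]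
          rfl
      _ = (ν ⊗ₘ κ n) {p : S × ℝ | p.2 + g n p.1 ≤ x} := by rw [hpair]
      _ = ∫⁻ c, (κ n) c (Prod.mk c ⁻¹' {p : S × ℝ | p.2 + g n p.1 ≤ x}) ∂ν :=
          Measure.compProd_apply (hT n)
      _ = ∫⁻ c, (κ n) c (Set.Iic (x - g n c)) ∂ν :=
          lintegral_congr fun c => by rw [hset n c]
  -- measurability of the kernel integrand
  have hmeasκ : ∀ n, Measurable fun c => (κ n) c (Set.Iic (x - g n c)) := by
    intro n
    have hm := Kernel.measurable_kernel_prodMk_left (κ := κ n) (hT n)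
    have heq : (fun c => (κ n) c (Prod.mk c ⁻¹' {p : S × ℝ | p.2 + g n p.1 ≤ x}))
        = fun c => (κ n) c (Set.Iic (x - g n c)) := funext fun c => by rw [hset n c]
    rwa [heq] at hm
  -- real-valued conditional CDF at the moving point
  set F : ℕ → S → ℝ := fun n c => ((κ n) c (Set.Iic (x - g n c))).toReal with hF
  set P : ℕ → S → ℝ := fun n c => stdNormalCDF (x - g n c) with hP
  have key2 : ∀ n, (μ {ω | Z n ω + g n (C ω) ≤ x}).toReal = ∫ c, F n c ∂ν := by
    intro n
    rw [key1 n, ← integral_toReal (hmeasκ n).aemeasurable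
      (Filter.Eventually.of_forall fun c => lt_of_le_of_lt prob_le_one ENNReal.one_lt_top)]
  -- integrability
  have hFbd : ∀ n c, |F n c| ≤ 1 := by
    intro n c
    rw [abs_of_nonneg ENNReal.toReal_nonneg]
    exact ENNReal.toReal_le_of_le_ofReal zero_le_one (by simpa using prob_le_one)
  have hPbd : ∀ n c, |P n c| ≤ 1 := fun n c => by
    rw [abs_of_nonneg (phi_nonneg _)]; exact phi_le_one _
  have hFmeas : ∀ n, AEStronglyMeasurable (F n) ν := fun n =>
    ((hmeasκ n).ennreal_toReal).aestronglyMeasurable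
  have hPmeas : ∀ n, AEStronglyMeasurable (P n) ν := fun n =>
    (phi_continuous.measurable.comp (measurable_const.sub (hg n))).aestronglyMeasurable
  have hFint : ∀ n, Integrable (F n) ν := fun n =>
    (integrable_const (1:ℝ)).mono' (hFmeas n)
      (Filter.Eventually.of_forall fun c => by simpa using hFbd n c)
  have hPint : ∀ n, Integrable (P n) ν := fun n =>
    (integrable_const (1:ℝ)).mono' (hPmeas n)
      (Filter.Eventually.of_forall fun c => by simpa using hPbd n c)
  -- Step 2: the error term tends to zero
  have hE : Tendsto (fun n => ∫ c, (F n c - P n c) ∂ν) atTop (nhds 0) := by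
    have hae : ∀ᵐ c ∂ν, ∀ k i : ℕ, Tendsto (fun n => ((κ n) c (Set.Iic (gridPt k i))).toReal)
        atTop (nhds (stdNormalCDF (gridPt k i))) :=
      ae_all_iff.2 fun k => ae_all_iff.2 fun i => hcond (gridPt k i)
    have hlim : ∀ᵐ c ∂ν, Tendsto (fun n => F n c - P n c) atTop (nhds 0) := by
      filter_upwards [hae] with c hc
      exact polya_tendsto (fun n s => ((κ n) c (Set.Iic s)).toReal)
        (fun n a b hab => ENNReal.toReal_mono (measure_ne_top _ _)
          (measure_mono (Set.Iic_subset_Iic.2 hab)))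
        (fun n t => ENNReal.toReal_nonneg)
        (fun n t => ENNReal.toReal_le_of_le_ofReal zero_le_one (by simpa using prob_le_one))
        (fun k i => hc k i) (fun n => x - g n c)
    have := tendsto_integral_of_dominated_convergence (bound := fun _ => (2:ℝ))
      (F := fun n c => F n c - P n c) (f := fun _ => (0:ℝ))
      (fun n => (hFmeas n).sub (hPmeas n)) (integrable_const _)
      (fun n => Filter.Eventually.of_forall fun c => by
        have := abs_sub (F n c) (P n c)
        rw [Real.norm_eq_abs]
        calc |F n c - P n c| ≤ |F n c| + |P n c| := abs_sub _ _
          _ ≤ 2 := by linarith [hFbd n c, hPbd n c])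
      hlim
    simpa using this
  -- Step 3: the main term, via Fubini over the Gaussian
  have hmeasPhi : ∀ n, Measurable fun c => γ (Set.Iic (x - g n c)) := by
    intro n
    have h1 : Measurable fun t : ℝ => γ (Set.Iic t) :=
      Monotone.measurable fun a b hab => measure_mono (Set.Iic_subset_Iic.2 hab)
    exact h1.comp (measurable_const.sub (hg n))
  have keyB : ∀ n, ∫ c, P n c ∂ν = ∫ z, (μ {ω | g n (C ω) ≤ x - z}).toReal ∂γ := by
    intro n
    have hU : MeasurableSet {p : S × ℝ | p.2 + g n p.1 ≤ x} := hT n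
    have hswap : ∫⁻ c, γ (Set.Iic (x - g n c)) ∂ν = ∫⁻ z, ν {c | g n c ≤ x - z} ∂γ := by
      have h1 : ∀ c, γ (Set.Iic (x - g n c))
          = ∫⁻ z, ({p : S × ℝ | p.2 + g n p.1 ≤ x}.indicator
              (1 : S × ℝ → ENNReal)) (c, z) ∂γ := by
        intro c
        have heq : (fun z : ℝ => ({p : S × ℝ | p.2 + g n p.1 ≤ x}.indicator
            (1 : S × ℝ → ENNReal)) (c, z))
            = (Set.Iic (x - g n c)).indicator (1 : ℝ → ENNReal) := by
          funext z
          simp only [Set.indicator_apply, Set.mem_setOf_eq, Set.mem_Iic]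
          exact if_congr (by constructor <;> intro h <;> linarith) rfl rfl
        rw [heq, lintegral_indicator_one measurableSet_Iic]
      have h2 : ∀ z : ℝ, ν {c | g n c ≤ x - z}
          = ∫⁻ c, ({p : S × ℝ | p.2 + g n p.1 ≤ x}.indicator
              (1 : S × ℝ → ENNReal)) (c, z) ∂ν := by
        intro z
        have heq : (fun c : S => ({p : S × ℝ | p.2 + g n p.1 ≤ x}.indicator
            (1 : S × ℝ → ENNReal)) (c, z))
            = {c : S | g n c ≤ x - z}.indicator (1 : S → ENNReal) := by
          funext c
          simp only [Set.indicator_apply, Set.mem_setOf_eq]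
          exact if_congr (by constructor <;> intro h <;> linarith) rfl rfl
        rw [heq, lintegral_indicator_one (show MeasurableSet {c : S | g n c ≤ x - z} from (hg n) measurableSet_Iic)]
      calc ∫⁻ c, γ (Set.Iic (x - g n c)) ∂ν
          = ∫⁻ c, ∫⁻ z, ({p : S × ℝ | p.2 + g n p.1 ≤ x}.indicator
              (1 : S × ℝ → ENNReal)) (c, z) ∂γ ∂ν := lintegral_congr fun c => h1 c
        _ = ∫⁻ z, ∫⁻ c, ({p : S × ℝ | p.2 + g n p.1 ≤ x}.indicator
              (1 : S × ℝ → ENNReal)) (c, z) ∂ν ∂γ := by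
            apply lintegral_lintegral_swap
            exact ((measurable_one.indicator hU).comp
              (measurable_fst.prodMk measurable_snd)).aemeasurable
        _ = ∫⁻ z, ν {c | g n c ≤ x - z} ∂γ := lintegral_congr fun z => (h2 z).symm
    have hL : ∫ c, P n c ∂ν = (∫⁻ c, γ (Set.Iic (x - g n c)) ∂ν).toReal := by
      have h0 : ∫ c, P n c ∂ν = ∫ c, (γ (Set.Iic (x - g n c))).toReal ∂ν := rfl
      rw [h0, integral_toReal (hmeasPhi n).aemeasurable
        (Filter.Eventually.of_forall fun c => lt_of_le_of_lt prob_le_one ENNReal.one_lt_top)]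
    have hmeasν : Measurable fun z : ℝ => ν {c | g n c ≤ x - z} := by
      refine Antitone.measurable fun a b hab => ?_
      exact measure_mono fun c hc => by simp only [Set.mem_setOf_eq] at hc ⊢; linarith
    have hR : ∫ z, (μ {ω | g n (C ω) ≤ x - z}).toReal ∂γ
        = (∫⁻ z, ν {c | g n c ≤ x - z} ∂γ).toReal := by
      have hmap : ∀ z : ℝ, μ {ω | g n (C ω) ≤ x - z} = ν {c | g n c ≤ x - z} := by
        intro z
        rw [hν, Measure.map_apply hC
          (show MeasurableSet {c : S | g n c ≤ x - z} from (hg n) measurableSet_Iic)]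
        rfl
      simp_rw [hmap]
      rw [integral_toReal hmeasν.aemeasurable
        (Filter.Eventually.of_forall fun z => lt_of_le_of_lt prob_le_one ENNReal.one_lt_top)]
    rw [hL, hR, hswap]
  -- limit of the main term
  have hlimPhi : ∫ z, stdNormalCDF (x - z) ∂γ = stdNormalCDF (x / Real.sqrt 2) := by
    have hmeas : Measurable fun z : ℝ => γ (Set.Iic (x - z)) := by
      refine Antitone.measurable fun a b hab => ?_
      exact measure_mono (Set.Iic_subset_Iic.2 (by linarith))
    have h1 : ∫ z, stdNormalCDF (x - z) ∂γ = (∫⁻ z, γ (Set.Iic (x - z)) ∂γ).toReal := by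
      have h0 : ∫ z, stdNormalCDF (x - z) ∂γ = ∫ z, (γ (Set.Iic (x - z))).toReal ∂γ := rfl
      rw [h0, integral_toReal hmeas.aemeasurable
        (Filter.Eventually.of_forall fun z => lt_of_le_of_lt prob_le_one ENNReal.one_lt_top)]
    rw [h1, hγ, conv_iic, gaussian_two_iic]
    rfl
  have hB : Tendsto (fun n => ∫ c, P n c ∂ν) atTop (nhds (stdNormalCDF (x / Real.sqrt 2))) := by
    have hGmeas : ∀ n, AEStronglyMeasurable
        (fun z : ℝ => (μ {ω | g n (C ω) ≤ x - z}).toReal) γ := by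
      intro n
      refine (Antitone.measurable fun a b hab => ?_).aestronglyMeasurable
      refine ENNReal.toReal_mono (measure_ne_top _ _) ?_
      exact measure_mono fun ω hω => by simp only [Set.mem_setOf_eq] at hω ⊢; linarith
    have hdc := tendsto_integral_of_dominated_convergence (bound := fun _ => (1:ℝ))
      (F := fun n z => (μ {ω | g n (C ω) ≤ x - z}).toReal)
      (f := fun z => stdNormalCDF (x - z)) (μ := γ)
      hGmeas (integrable_const _)
      (fun n => Filter.Eventually.of_forall fun z => by
        rw [Real.norm_eq_abs, abs_of_nonneg ENNReal.toReal_nonneg]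
        exact ENNReal.toReal_le_of_le_ofReal zero_le_one (by simpa using prob_le_one))
      (Filter.Eventually.of_forall fun z => hW (x - z))
    rw [hlimPhi] at hdc
    have := hdc
    refine Tendsto.congr (fun n => (keyB n).symm) this
  -- assemble
  have hsplit : ∀ n, (μ {ω | Z n ω + g n (C ω) ≤ x}).toReal
      = (∫ c, (F n c - P n c) ∂ν) + ∫ c, P n c ∂ν := by
    intro n
    rw [key2 n, integral_sub (hFint n) (hPint n)]
    ring
  have hfinal := hE.add hB
  rw [zero_add] at hfinal
  exact Tendsto.congr (fun n => (hsplit n).symm) hfinal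
end

section
/- Let (Ω, ℱ, μ) be a probability space and 𝒱 a finite set. For i = 1,…,n let V_i, V*_i : Ω → 𝒱 be random variables and Y_i : Ω → ℝ be bounded random variables. Define the probability mass functions h_i(v) = μ(V_i = v) and h*_i(v) = μ(V*_i = v), their averages h̄(v) = (1/n)Σ_{i=1}^n h_i(v) and h̄*(v) = (1/n)Σ_{i=1}^n h*_i(v), and assume positivity: h̄(v) > 0 whenever h̄*(v) > 0. Suppose there is a function m : 𝒱 → ℝ such that for every i, E[Y_i | V_i] = m(V_i) almost surely, and set ψ = (1/n)Σ_{i=1}^n E[m(V*_i)]. Then: (i) for every function w : 𝒱 → ℝ, E[ (1/n) Σ_{i=1}^n ( m(V*_i) − ψ + w(V_i)·(Y_i − m(V_i)) ) ] = 0; and (ii) for every function m̃ : 𝒱 → ℝ, E[ (1/n) Σ_{i=1}^n ( m̃(V*_i) − ψ + (h̄*(V_i)/h̄(V_i))·(Y_i − m̃(V_i)) ) ] = 0. That is, the estimating equation based on the influence function is unbiased for ψ if either the outcome regression m or the weight function h̄*/h̄ is correctly specified. -/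
open MeasureTheory ProbabilityTheory Filter

theorem stmt_12 {Ω 𝒱 : Type} [MeasurableSpace Ω]
    [Fintype 𝒱] [MeasurableSpace 𝒱] [MeasurableSingletonClass 𝒱]
    (μ : Measure Ω) [IsProbabilityMeasure μ]
    (n : ℕ) (hn : 0 < n)
    (V Vstar : Fin n → Ω → 𝒱)
    (hV : ∀ i, Measurable (V i)) (hVstar : ∀ i, Measurable (Vstar i))
    (Y : Fin n → Ω → ℝ) (hYmeas : ∀ i, Measurable (Y i))
    (B : ℝ) (hYbdd : ∀ i ω, |Y i ω| ≤ B)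
    (hbar hbarstar : 𝒱 → ℝ)
    (hbar_def : ∀ v, hbar v = (1 / n : ℝ) * ∑ i, (μ {ω | V i ω = v}).toReal)
    (hbarstar_def : ∀ v, hbarstar v = (1 / n : ℝ) * ∑ i, (μ {ω | Vstar i ω = v}).toReal)
    (hpos : ∀ v, 0 < hbarstar v → 0 < hbar v)
    (m : 𝒱 → ℝ)
    (hreg : ∀ i, μ[Y i | MeasurableSpace.comap (V i) inferInstance]
      =ᵐ[μ] fun ω => m (V i ω))
    (ψ : ℝ) (hψ : ψ = (1 / n : ℝ) * ∑ i, ∫ ω, m (Vstar i ω) ∂μ) :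
    (∀ w : 𝒱 → ℝ,
      ∫ ω, (1 / n : ℝ) * ∑ i,
        (m (Vstar i ω) - ψ + w (V i ω) * (Y i ω - m (V i ω))) ∂μ = 0) ∧
    (∀ mtilde : 𝒱 → ℝ,
      ∫ ω, (1 / n : ℝ) * ∑ i,
        (mtilde (Vstar i ω) - ψ +
          (hbarstar (V i ω) / hbar (V i ω)) * (Y i ω - mtilde (V i ω))) ∂μ = 0) := by
  classical
  have hnR : (n : ℝ) ≠ 0 := by exact_mod_cast hn.ne'
  -- bounded measurable functions are integrable
  have hbdd_int : ∀ F : Ω → ℝ, Measurable F → (∃ C, ∀ ω, |F ω| ≤ C) → Integrable F μ := by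
    rintro F hF ⟨C, hC⟩
    exact (integrable_const C).mono' hF.aestronglyMeasurable
      (Filter.Eventually.of_forall fun ω => by simpa using hC ω)
  have hcomp_bound : ∀ (f : 𝒱 → ℝ) (X : Ω → 𝒱) (ω : Ω), |f (X ω)| ≤ ∑ v, |f v| :=
    fun f X ω => Finset.single_le_sum (f := fun v => |f v|)
      (fun v _ => abs_nonneg _) (Finset.mem_univ (X ω))
  have hcomp_int : ∀ (f : 𝒱 → ℝ) (X : Ω → 𝒱), Measurable X → Integrable (fun ω => f (X ω)) μ :=
    fun f X hX => hbdd_int _ ((measurable_of_countable f).comp hX)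
      ⟨∑ v, |f v|, hcomp_bound f X⟩
  have hYint : ∀ i, Integrable (Y i) μ :=
    fun i => hbdd_int _ (hYmeas i) ⟨B, hYbdd i⟩
  have hmeas_set : ∀ (X : Ω → 𝒱), Measurable X → ∀ v, MeasurableSet {ω | X ω = v} := by
    intro X hX v
    exact hX (measurableSet_singleton v)
  -- decomposition of ∫ g(Xω) * F ω as a sum over values
  have hdecomp : ∀ (g : 𝒱 → ℝ) (X : Ω → 𝒱), Measurable X → ∀ F : Ω → ℝ, Integrable F μ →
      ∫ ω, g (X ω) * F ω ∂μ = ∑ v, g v * ∫ ω in {ω | X ω = v}, F ω ∂μ := by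
    intro g X hX F hF
    have hpt : ∀ ω, g (X ω) * F ω
        = ∑ v, Set.indicator {ω | X ω = v} (fun ω => g v * F ω) ω := by
      intro ω
      rw [Finset.sum_eq_single (X ω)]
      · rw [Set.indicator_of_mem (by exact rfl)]
      · intro v _ hv
        refine Set.indicator_of_notMem ?_ _
        intro h
        exact hv (Eq.symm (show X ω = v from h))
      · exact fun h => absurd (Finset.mem_univ _) h
    calc ∫ ω, g (X ω) * F ω ∂μ
        = ∫ ω, ∑ v, Set.indicator {ω | X ω = v} (fun ω => g v * F ω) ω ∂μ := by
          exact integral_congr_ae (Filter.Eventually.of_forall hpt)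
      _ = ∑ v, ∫ ω, Set.indicator {ω | X ω = v} (fun ω => g v * F ω) ω ∂μ := by
          exact integral_finset_sum _ fun v _ =>
            ((hF.const_mul (g v)).indicator (hmeas_set X hX v))
      _ = ∑ v, g v * ∫ ω in {ω | X ω = v}, F ω ∂μ := by
          refine Finset.sum_congr rfl fun v _ => ?_
          rw [integral_indicator (hmeas_set X hX v), integral_const_mul]
  -- pmf form of expectations of functions of a discrete RV
  have hpmf : ∀ (f : 𝒱 → ℝ) (X : Ω → 𝒱), Measurable X →
      ∫ ω, f (X ω) ∂μ = ∑ v, f v * (μ {ω | X ω = v}).toReal := by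
    intro f X hX
    have := hdecomp f X hX (fun _ => (1 : ℝ)) (integrable_const 1)
    simp only [mul_one] at this
    rw [this]
    refine Finset.sum_congr rfl fun v _ => ?_
    rw [setIntegral_const, smul_eq_mul, mul_one]; rfl
  -- key: conditional expectation identity on level sets of V i
  have hkey : ∀ i v, ∫ ω in {ω | V i ω = v}, Y i ω ∂μ
      = m v * (μ {ω | V i ω = v}).toReal := by
    intro i v
    have hm : MeasurableSpace.comap (V i) inferInstance ≤ (inferInstance : MeasurableSpace Ω) :=
      (hV i).comap_le
    have hs : MeasurableSet[MeasurableSpace.comap (V i) inferInstance] {ω | V i ω = v} :=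
      ⟨{v}, measurableSet_singleton v, rfl⟩
    have h1 : ∫ ω in {ω | V i ω = v}, Y i ω ∂μ
        = ∫ ω in {ω | V i ω = v}, (μ[Y i | MeasurableSpace.comap (V i) inferInstance]) ω ∂μ :=
      (setIntegral_condExp hm (hYint i) hs).symm
    have h2 : ∫ ω in {ω | V i ω = v}, (μ[Y i | MeasurableSpace.comap (V i) inferInstance]) ω ∂μ
        = ∫ ω in {ω | V i ω = v}, m (V i ω) ∂μ :=
      setIntegral_congr_ae (hmeas_set (V i) (hV i) v) ((hreg i).mono fun ω h _ => h)
    have h3 : ∫ ω in {ω | V i ω = v}, m (V i ω) ∂μ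
        = ∫ ω in {ω | V i ω = v}, m v ∂μ := by
      refine setIntegral_congr_fun (hmeas_set (V i) (hV i) v) fun ω hω => ?_
      simp only [Set.mem_setOf_eq] at hω
      rw [hω]
    rw [h1, h2, h3, setIntegral_const, smul_eq_mul, mul_comm]; rfl
  -- residual lemma
  have hzero : ∀ (g f : 𝒱 → ℝ) (i : Fin n),
      ∫ ω, g (V i ω) * (Y i ω - f (V i ω)) ∂μ
        = ∑ v, g v * (m v - f v) * (μ {ω | V i ω = v}).toReal := by
    intro g f i
    have hFint : Integrable (fun ω => Y i ω - f (V i ω)) μ :=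
      (hYint i).sub (hcomp_int f (V i) (hV i))
    rw [hdecomp g (V i) (hV i) _ hFint]
    refine Finset.sum_congr rfl fun v _ => ?_
    have hsub : ∫ ω in {ω | V i ω = v}, (Y i ω - f (V i ω)) ∂μ
        = (∫ ω in {ω | V i ω = v}, Y i ω ∂μ) - ∫ ω in {ω | V i ω = v}, f (V i ω) ∂μ :=
      integral_sub ((hYint i).restrict) ((hcomp_int f (V i) (hV i)).restrict)
    have hconst : ∫ ω in {ω | V i ω = v}, f (V i ω) ∂μ
        = f v * (μ {ω | V i ω = v}).toReal := by
      have : ∫ ω in {ω | V i ω = v}, f (V i ω) ∂μ = ∫ ω in {ω | V i ω = v}, f v ∂μ := by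
        refine setIntegral_congr_fun (hmeas_set (V i) (hV i) v) fun ω hω => ?_
        simp only [Set.mem_setOf_eq] at hω
        rw [hω]
      rw [this, setIntegral_const, smul_eq_mul, mul_comm]; rfl
    rw [hsub, hkey i v, hconst]
    ring
  -- integrand integrability (per i)
  have hprod_int : ∀ (mt g : 𝒱 → ℝ) (i : Fin n),
      Integrable (fun ω => g (V i ω) * (Y i ω - mt (V i ω))) μ := by
    intro mt g i
    refine hbdd_int _ (((measurable_of_countable g).comp (hV i)).mul
      ((hYmeas i).sub ((measurable_of_countable mt).comp (hV i)))) ?_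
    refine ⟨(∑ v, |g v|) * (B + ∑ v, |mt v|), fun ω => ?_⟩
    rw [abs_mul]
    refine mul_le_mul (hcomp_bound g (V i) ω) ?_ (abs_nonneg _)
      (Finset.sum_nonneg fun v _ => abs_nonneg _)
    calc |Y i ω - mt (V i ω)| ≤ |Y i ω| + |mt (V i ω)| := abs_sub _ _
      _ ≤ B + ∑ v, |mt v| := add_le_add (hYbdd i ω) (hcomp_bound mt (V i) ω)
  have hAint : ∀ (mt g : 𝒱 → ℝ) (i : Fin n),
      Integrable (fun ω => mt (Vstar i ω) - ψ + g (V i ω) * (Y i ω - mt (V i ω))) μ :=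
    fun mt g i => ((hcomp_int mt (Vstar i) (hVstar i)).sub (integrable_const ψ)).add
      (hprod_int mt g i)
  -- ψ in pmf form
  have hψ' : ψ = ∑ v, m v * hbarstar v := by
    rw [hψ]
    have h1 : ∑ i, ∫ ω, m (Vstar i ω) ∂μ
        = ∑ v, m v * ∑ i : Fin n, (μ {ω | Vstar i ω = v}).toReal := by
      rw [Finset.sum_congr rfl (fun i _ => hpmf m (Vstar i) (hVstar i)), Finset.sum_comm]
      exact Finset.sum_congr rfl fun v _ => (Finset.mul_sum _ _ _).symm
    rw [h1, Finset.mul_sum]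
    refine Finset.sum_congr rfl fun v _ => ?_
    rw [hbarstar_def v]
    ring
  -- master formula
  have master : ∀ (mt g : 𝒱 → ℝ),
      ∫ ω, (1 / n : ℝ) * ∑ i,
        (mt (Vstar i ω) - ψ + g (V i ω) * (Y i ω - mt (V i ω))) ∂μ
      = (∑ v, mt v * hbarstar v) - ψ + ∑ v, g v * (m v - mt v) * hbar v := by
    intro mt g
    have hAi : ∀ i : Fin n,
        ∫ ω, (mt (Vstar i ω) - ψ + g (V i ω) * (Y i ω - mt (V i ω))) ∂μ
        = (∑ v, mt v * (μ {ω | Vstar i ω = v}).toReal) - ψ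
          + ∑ v, g v * (m v - mt v) * (μ {ω | V i ω = v}).toReal := by
      intro i
      have hprod := hprod_int mt g i
      have h1 : Integrable (fun ω => mt (Vstar i ω) - ψ) μ :=
        (hcomp_int mt (Vstar i) (hVstar i)).sub (integrable_const ψ)
      rw [integral_add h1 hprod,
        integral_sub (hcomp_int mt (Vstar i) (hVstar i)) (integrable_const ψ),
        integral_const, hpmf mt (Vstar i) (hVstar i), hzero g mt i]
      simp
    rw [integral_const_mul, integral_finset_sum _ fun i _ => hAint mt g i]
    simp_rw [hAi]
    rw [Finset.sum_add_distrib, Finset.sum_sub_distrib, Finset.sum_const, Finset.card_univ,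
      Fintype.card_fin]
    have g1 : ∑ i : Fin n, ∑ v, mt v * (μ {ω | Vstar i ω = v}).toReal
        = (n : ℝ) * ∑ v, mt v * hbarstar v := by
      rw [Finset.sum_comm, Finset.mul_sum]
      refine Finset.sum_congr rfl fun v _ => ?_
      rw [← Finset.mul_sum, hbarstar_def v]
      field_simp
    have g2 : ∑ i : Fin n, ∑ v, g v * (m v - mt v) * (μ {ω | V i ω = v}).toReal
        = (n : ℝ) * ∑ v, g v * (m v - mt v) * hbar v := by
      rw [Finset.sum_comm, Finset.mul_sum]
      refine Finset.sum_congr rfl fun v _ => ?_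
      rw [← Finset.mul_sum, hbar_def v]
      field_simp
    rw [g1, g2, nsmul_eq_mul]
    field_simp
  -- nonnegativity of hbarstar
  have hstar_nonneg : ∀ v, 0 ≤ hbarstar v := by
    intro v
    rw [hbarstar_def v]
    exact mul_nonneg (by positivity) (Finset.sum_nonneg fun i _ => ENNReal.toReal_nonneg)
  constructor
  · intro w
    rw [master m w, hψ']
    simp
  · intro mt
    rw [master mt (fun v => hbarstar v / hbar v), hψ']
    have key : ∀ v, hbarstar v / hbar v * (m v - mt v) * hbar v
        = (m v - mt v) * hbarstar v := by
      intro v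
      by_cases h : hbar v = 0
      · have h0 : hbarstar v = 0 := by
          by_contra hne
          have hlt := hpos v (lt_of_le_of_ne (hstar_nonneg v) (Ne.symm hne))
          rw [h] at hlt
          exact lt_irrefl 0 hlt
        rw [h, h0]; ring
      · field_simp
    simp_rw [key]
    simp_rw [sub_mul, Finset.sum_sub_distrib]
    ring
end

section
/- Let (Ω, ℱ, μ) be a probability space, let 𝒞, 𝒳, 𝒱 be finite sets and E a measurable space. Let C : Ω → 𝒞 and X : Ω → 𝒳 be random variables, and let ε_1,…,ε_n : Ω → E be identically distributed random variables such that the vector (ε_1,…,ε_n) is independent of the pair (C, X). Let f_Y : 𝒱 × E → ℝ be bounded measurable, let s_1,…,s_n : 𝒞 × 𝒳 → 𝒱 be functions, and fix x* ∈ 𝒳. Define V_i = s_i(C, X), Y_i = f_Y(V_i, ε_i), V*_i = s_i(C, x*), Y*_i = f_Y(V*_i, ε_i), and m(v) = E[f_Y(v, ε_1)]. Then: (i) for every i and every v ∈ 𝒱 with μ(V_i = v) > 0, E[Y_i | V_i = v] = m(v); and (ii) the expected average counterfactual outcome is identified by the observed-data functional: E[ (1/n) Σ_{i=1}^n Y*_i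 ] = (1/n) Σ_{i=1}^n Σ_{c∈𝒞} m(s_i(c, x*)) · μ(C = c). -/
open MeasureTheory ProbabilityTheory Filter

theorem stmt_13 {Ω 𝒞 𝒳 𝒱 E : Type}
    [MeasurableSpace Ω]
    [Fintype 𝒞] [MeasurableSpace 𝒞] [MeasurableSingletonClass 𝒞]
    [Fintype 𝒳] [MeasurableSpace 𝒳] [MeasurableSingletonClass 𝒳]
    [Fintype 𝒱] [MeasurableSpace 𝒱] [MeasurableSingletonClass 𝒱]
    [MeasurableSpace E]
    (μ : Measure Ω) [IsProbabilityMeasure μ]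
    (n : ℕ) (hn : 0 < n)
    (C : Ω → 𝒞) (hC : Measurable C)
    (X : Ω → 𝒳) (hX : Measurable X)
    (ε : Fin n → Ω → E) (hε : ∀ i, Measurable (ε i))
    (hident : ∀ i j, μ.map (ε i) = μ.map (ε j))
    (hindep : IndepFun (fun ω (i : Fin n) => ε i ω) (fun ω => (C ω, X ω)) μ)
    (fY : 𝒱 × E → ℝ) (hfY : Measurable fY)
    (B : ℝ) (hfYbdd : ∀ p, |fY p| ≤ B)
    (s : Fin n → 𝒞 × 𝒳 → 𝒱) (xstar : 𝒳)
    (m : 𝒱 → ℝ) (hm : ∀ v, m v = ∫ ω, fY (v, ε ⟨0, hn⟩ ω) ∂μ) :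
    (∀ i : Fin n, ∀ v : 𝒱, 0 < μ {ω | s i (C ω, X ω) = v} →
      ∫ ω, fY (s i (C ω, X ω), ε i ω) ∂(μ[|{ω | s i (C ω, X ω) = v}]) = m v) ∧
    (∫ ω, (1 / n : ℝ) * ∑ i, fY (s i (C ω, xstar), ε i ω) ∂μ =
      (1 / n : ℝ) * ∑ i, ∑ c : 𝒞, m (s i (c, xstar)) * (μ {ω | C ω = c}).toReal) := by
  -- basic measurability
  have hεv : ∀ (i : Fin n) (v : 𝒱), Measurable (fun ω => fY (v, ε i ω)) :=
    fun i v => hfY.comp (measurable_const.prodMk (hε i))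
  -- identically distributed: each ε i has mean m v against fY (v, ·)
  have hmi : ∀ (i : Fin n) (v : 𝒱), ∫ ω, fY (v, ε i ω) ∂μ = m v := by
    intro i v
    have hfv : Measurable (fun e : E => fY (v, e)) :=
      hfY.comp (measurable_const.prodMk measurable_id)
    rw [hm v]
    have h1 : ∫ ω, fY (v, ε i ω) ∂μ = ∫ e, fY (v, e) ∂(μ.map (ε i)) :=
      (integral_map (hε i).aemeasurable hfv.aestronglyMeasurable).symm
    have h2 : ∫ ω, fY (v, ε ⟨0, hn⟩ ω) ∂μ = ∫ e, fY (v, e) ∂(μ.map (ε ⟨0, hn⟩)) :=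
      (integral_map (hε _).aemeasurable hfv.aestronglyMeasurable).symm
    rw [h1, h2, hident i ⟨0, hn⟩]
  -- key independence helper
  have key : ∀ (i : Fin n) (v : 𝒱) (T : Set (𝒞 × 𝒳)),
      ∫ ω, Set.indicator ((fun ω => (C ω, X ω)) ⁻¹' T) (fun ω => fY (v, ε i ω)) ω ∂μ
        = (μ ((fun ω => (C ω, X ω)) ⁻¹' T)).toReal * m v := by
    intro i v T
    have hψ : Measurable (T.indicator (fun _ => (1 : ℝ))) := measurable_of_countable _
    have hφ : Measurable (fun w : Fin n → E => fY (v, w i)) :=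
      hfY.comp (measurable_const.prodMk (measurable_pi_apply i))
    have hind : IndepFun (fun ω => T.indicator (fun _ => (1 : ℝ)) (C ω, X ω))
        (fun ω => fY (v, ε i ω)) μ :=
      (hindep.comp hφ hψ).symm
    have heq : (fun ω => Set.indicator ((fun ω => (C ω, X ω)) ⁻¹' T)
        (fun ω => fY (v, ε i ω)) ω)
        = fun ω => (T.indicator (fun _ => (1 : ℝ)) (C ω, X ω)) * fY (v, ε i ω) := by
      funext ω
      by_cases h : (C ω, X ω) ∈ T <;>
        simp [Set.indicator_apply, Set.mem_preimage, h]
    rw [heq]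
    have := hind.integral_mul_eq_mul_integral (hψ.comp (hC.prodMk hX)).aestronglyMeasurable
      (hεv i v).aestronglyMeasurable
    rw [show (fun ω => (T.indicator (fun _ => (1:ℝ)) (C ω, X ω)) * fY (v, ε i ω))
        = (fun ω => T.indicator (fun _ => (1:ℝ)) (C ω, X ω)) * (fun ω => fY (v, ε i ω))
        from rfl, this, hmi i v]
    congr 1
    have hpre : MeasurableSet ((fun ω => (C ω, X ω)) ⁻¹' T) :=
      (hC.prodMk hX) (Set.toFinite T).measurableSet
    have : (fun ω => T.indicator (fun _ => (1:ℝ)) (C ω, X ω))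
        = Set.indicator ((fun ω => (C ω, X ω)) ⁻¹' T) (fun _ => (1 : ℝ)) := by
      funext ω
      by_cases h : (C ω, X ω) ∈ T <;> simp [Set.indicator_apply, Set.mem_preimage, h]
    rw [this]
    exact integral_indicator_one hpre
  constructor
  · -- part (i)
    intro i v hpos
    set A : Set Ω := {ω | s i (C ω, X ω) = v} with hA
    have hApre : A = (fun ω => (C ω, X ω)) ⁻¹' {p | s i p = v} := rfl
    have hAm : MeasurableSet A := by
      rw [hApre]
      exact (hC.prodMk hX) (Set.toFinite _).measurableSet
    have hμA : (μ A).toReal ≠ 0 := by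
      have h1 : μ A ≠ 0 := ne_of_gt hpos
      have h2 : μ A ≠ ⊤ := measure_ne_top μ A
      simp [ENNReal.toReal_ne_zero, h1, h2]
    rw [ProbabilityTheory.cond, integral_smul_measure]
    have hset : ∫ ω in A, fY (s i (C ω, X ω), ε i ω) ∂μ
        = ∫ ω in A, fY (v, ε i ω) ∂μ := by
      apply setIntegral_congr_fun hAm
      intro ω hω
      simp only [hA, Set.mem_setOf_eq] at hω
      simp [hω]
    rw [hset, ← integral_indicator hAm, hApre, key i v _]
    rw [← hApre]
    rw [ENNReal.toReal_inv]
    rw [smul_eq_mul]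
    field_simp
  · -- part (ii)
    have hint : ∀ i : Fin n, Integrable (fun ω => fY (s i (C ω, xstar), ε i ω)) μ := by
      intro i
      have hmeas : Measurable (fun ω => fY (s i (C ω, xstar), ε i ω)) :=
        hfY.comp (((measurable_of_countable (fun c => s i (c, xstar))).comp hC).prodMk (hε i))
      refine ⟨hmeas.aestronglyMeasurable, HasFiniteIntegral.of_bounded (C := B)
        (ae_of_all _ fun ω => ?_)⟩
      simpa [Real.norm_eq_abs] using hfYbdd _
    rw [integral_const_mul]
    congr 1
    rw [integral_finset_sum _ (fun i _ => hint i)]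
    apply Finset.sum_congr rfl
    intro i _
    -- decompose over values of C
    have hdecomp : (fun ω => fY (s i (C ω, xstar), ε i ω))
        = fun ω => ∑ c : 𝒞, Set.indicator ((fun ω => (C ω, X ω)) ⁻¹' {p | p.1 = c})
            (fun ω => fY (s i (c, xstar), ε i ω)) ω := by
      funext ω
      rw [Finset.sum_eq_single (C ω)]
      · simp [Set.indicator_apply, Set.mem_preimage]
      · intro c _ hc
        simp [Set.indicator_apply, Set.mem_preimage, Ne.symm hc]
      · simp
    rw [hdecomp]
    have hintc : ∀ c : 𝒞, Integrable (Set.indicator ((fun ω => (C ω, X ω)) ⁻¹' {p | p.1 = c})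
        (fun ω => fY (s i (c, xstar), ε i ω))) μ := by
      intro c
      have hpre : MeasurableSet ((fun ω => (C ω, X ω)) ⁻¹' {p : 𝒞 × 𝒳 | p.1 = c}) :=
        (hC.prodMk hX) (Set.toFinite _).measurableSet
      refine Integrable.indicator ?_ hpre
      refine ⟨(hεv i _).aestronglyMeasurable, HasFiniteIntegral.of_bounded (C := B)
        (ae_of_all _ fun ω => ?_)⟩
      simpa [Real.norm_eq_abs] using hfYbdd _
    rw [integral_finset_sum _ (fun c _ => hintc c)]
    apply Finset.sum_congr rfl
    intro c _
    rw [key i _ _]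
    rw [show ((fun ω => (C ω, X ω)) ⁻¹' {p : 𝒞 × 𝒳 | p.1 = c}) = {ω | C ω = c} from rfl]
    ring
end
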